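/- Every core compact topological space is injectively core compact. -/

import Mathlib

open TopologicalSpace
/-- A topological space is *core compact* if for every point `x` and open set `U ∋ x`
there is an open `V ∋ x` such that every open cover of `U` has a finite subfamily
covering `V`. -/
def CoreCompact (Y : Type*) [TopologicalSpace Y] : Prop :=
  ∀ (x : Y) (U : Set Y), IsOpen U → x ∈ U →
    ∃ V : Set Y, IsOpen V ∧ x ∈ V ∧
      ∀ 𝒰 : Set (Set Y), (∀ W ∈ 𝒰, IsOpen W) → U ⊆ ⋃₀ 𝒰 →
        ∃ F : Finset (Set Y), ↑F ⊆ 𝒰 ∧ V ⊆ ⋃₀ ↑F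


/-- The adherence of a filter: its set of cluster points. -/
def adh {Y : Type*} [TopologicalSpace Y] (F : Filter Y) : Set Y :=
  {y | ClusterPt y F}

/-- The infimum (in the order where a filter is smaller when it is coarser, i.e. has
fewer sets) of a family of filters: the coarsest filter contained in every member,
whose elements are exactly the sets belonging to all members, equivalently the sets
`⋃ᵢ Hᵢ` with `Hᵢ ∈ ℋᵢ`.  In Mathlib's order on filters this is the supremum. -/
def filterInfimum {Y : Type*} (H : Set (Filter Y)) : Filter Y :=
  sSup H

/-- A topological space is *injectively core compact* if for every `x`, every open
`U ∋ x` and every family `ℍ` of filters admitting an injection `θ` of `ℍ` into the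
open supersets of `U` with `adh ℋ ∩ θ ℋ = ∅` for all `ℋ ∈ ℍ`, the point `x` is not a
cluster point of the infimum filter `⋀_{ℋ ∈ ℍ} ℋ`. -/
def InjCoreCompact (Y : Type*) [TopologicalSpace Y] : Prop :=
  ∀ (x : Y) (U : Set Y), IsOpen U → x ∈ U →
    ∀ (H : Set (Filter Y)) (θ : Filter Y → Set Y),
      (∀ F ∈ H, IsOpen (θ F) ∧ U ⊆ θ F) →
      Set.InjOn θ H →
      (∀ F ∈ H, adh F ∩ θ F = ∅) →
      x ∉ adh (filterInfimum H)

/-- Every core compact topological space is injectively core compact. -/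
theorem coreCompact_injCoreCompact {X : Type*} [TopologicalSpace X]
    (h : CoreCompact X) : InjCoreCompact X := by
  intro x U hU hxU H θ hθ _ hadh hcl
  obtain ⟨V, hVopen, hxV, hVsub⟩ := h x U hU hxU
  -- For every F ∈ H there is A ∈ F with A ∩ V = ∅.
  have key : ∀ F : Filter X, ∃ A : Set X, F ∈ H → (A ∈ F ∧ A ∩ V = ∅) := by
    intro F
    by_cases hF : F ∈ H
    swap
    · exact ⟨∅, fun hF' => absurd hF' hF⟩
    -- consider the cover of U by open sets disjoint from some element of F
    set 𝒰 : Set (Set X) := {W | IsOpen W ∧ ∃ A ∈ F, W ∩ A = ∅} with h𝒰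
    have hcov : U ⊆ ⋃₀ 𝒰 := by
      intro y hyU
      have hyθ : y ∈ θ F := (hθ F hF).2 hyU
      have hyadh : y ∉ adh F := by
        intro hy
        have : y ∈ adh F ∩ θ F := ⟨hy, hyθ⟩
        rw [hadh F hF] at this
        exact this
      rw [adh, Set.mem_setOf_eq, clusterPt_iff_nonempty] at hyadh
      push_neg at hyadh
      obtain ⟨s, hs, t, ht, hst⟩ := hyadh
      obtain ⟨W, hWs, hWopen, hyW⟩ := mem_nhds_iff.1 hs
      refine ⟨W, ⟨hWopen, t, ht, ?_⟩, hyW⟩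
      exact Set.eq_empty_of_subset_empty (hst ▸ Set.inter_subset_inter_left t hWs)
    obtain ⟨G, hG𝒰, hVG⟩ := hVsub 𝒰 (fun W hW => hW.1) hcov
    have hchoice : ∀ W : Set X, ∃ A : Set X, W ∈ (G : Set (Set X)) → (A ∈ F ∧ W ∩ A = ∅) := by
      intro W
      by_cases hW : W ∈ (G : Set (Set X))
      · obtain ⟨_, A, hA, hWA⟩ := hG𝒰 hW
        exact ⟨A, fun _ => ⟨hA, hWA⟩⟩
      · exact ⟨∅, fun hW' => absurd hW' hW⟩
    choose A hA using hchoice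
    refine ⟨⋂ W ∈ G, A W, fun _ => ⟨?_, ?_⟩⟩
    · exact (Filter.biInter_finset_mem G).2 fun W hW => (hA W hW).1
    · ext z
      simp only [Set.mem_inter_iff, Set.mem_empty_iff_false, iff_false, not_and]
      intro hzA hzV
      obtain ⟨W, hWG, hzW⟩ := hVG hzV
      have hzAW : z ∈ A W := by
        simp only [Set.mem_iInter] at hzA
        exact hzA W hWG
      have : z ∈ W ∩ A W := ⟨hzW, hzAW⟩
      rw [(hA W hWG).2] at this
      exact this
  choose A hA using key
  -- the union of the chosen sets belongs to the infimum filter and misses V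
  have hS : (⋃ F ∈ H, A F) ∈ filterInfimum H := by
    refine Filter.mem_sSup.2 fun F hF => ?_
    exact Filter.mem_of_superset (hA F hF).1 (Set.subset_biUnion_of_mem hF)
  rw [adh, Set.mem_setOf_eq, clusterPt_iff_nonempty] at hcl
  obtain ⟨z, hzV, hzS⟩ := hcl (hVopen.mem_nhds hxV) hS
  simp only [Set.mem_iUnion] at hzS
  obtain ⟨F, hF, hzA⟩ := hzS
  have : z ∈ A F ∩ V := ⟨hzA, hzV⟩
  rw [(hA F hF).2] at this
  exact this
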